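/- Let f : ℝ → ℝ satisfy the one-sided monotonicity condition (y − y')(f(y) − f(y')) ≤ μ·|y − y'|² for all y, y' ∈ ℝ, with μ ≤ 0, and let Π_p be the truncation at level p > 0. Then the truncated function g(y) = f(Π_p(y)) satisfies y·(g(y) − g(0)) ≤ 0 for all y ∈ ℝ. -/
import Mathlib


noncomputable def trunc (p s : ℝ) : ℝ := if s = 0 then 0 else min p |s| * s / |s|

theorem stmt_5 (f : ℝ → ℝ) (μ : ℝ) (hμ : μ ≤ 0) (p : ℝ) (hp : 0 < p)
    (hmono : ∀ y y' : ℝ, (y - y') * (f y - f y') ≤ μ * |y - y'| ^ 2) :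
    ∀ y : ℝ, y * (f (trunc p y) - f (trunc p 0)) ≤ 0 := by
  intro y
  have h0 : trunc p 0 = 0 := by simp [trunc]
  rw [h0]
  rcases eq_or_ne y 0 with rfl | hy
  · simp [trunc]
  · have hay : (0:ℝ) < |y| := abs_pos.mpr hy
    have hc : (0:ℝ) < min p |y| / |y| := div_pos (lt_min hp hay) hay
    have ht : trunc p y = (min p |y| / |y|) * y := by
      simp [trunc, hy]; ring
    have key := hmono (trunc p y) 0
    simp only [sub_zero] at key
    have hμt : μ * |trunc p y| ^ 2 ≤ 0 :=
      mul_nonpos_of_nonpos_of_nonneg hμ (by positivity)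
    have h1 : trunc p y * (f (trunc p y) - f 0) ≤ 0 := key.trans hμt
    rw [ht] at h1
    rw [ht]
    nlinarith [h1, hc]
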